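/- For every real number ε with 0 ≤ ε < 1/3, there exists a finite set P ⊂ ℝ² such that for every set N ⊆ ℝ² with |N| ≤ 3 there exists a closed disk D with D ∩ N = ∅ and |D ∩ P| > ε·|P|. Hence no weak ε-net of size 3 with ε < 1/3 exists for disks, i.e., ε_3^D ≥ 1/3 for weak ε-nets. -/

import Mathlib

/-- A disk in ℝ²: a closed ball with nonnegative radius. -/
def IsDisk (D : Set (EuclideanSpace ℝ (Fin 2))) : Prop :=
  ∃ (c : EuclideanSpace ℝ (Fin 2)) (r : ℝ), 0 ≤ r ∧ D = Metric.closedBall c r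

open Finset

set_option maxHeartbeats 1600000

noncomputable def pt (x y : ℝ) : EuclideanSpace ℝ (Fin 2) :=
  (WithLp.equiv 2 (Fin 2 → ℝ)).symm ![x, y]

lemma pt_inj {a b c d : ℝ} (h : pt a b = pt c d) : a = c ∧ b = d := by
  constructor
  · have := congrFun (congrArg (fun p => (WithLp.equiv 2 (Fin 2 → ℝ)) p) h) 0; simpa [pt] using this
  · have := congrFun (congrArg (fun p => (WithLp.equiv 2 (Fin 2 → ℝ)) p) h) 1; simpa [pt] using this

lemma pt_eta (p : EuclideanSpace ℝ (Fin 2)) : p = pt (p 0) (p 1) := by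
  apply (WithLp.equiv 2 (Fin 2 → ℝ)).injective
  funext i
  fin_cases i <;> rfl

lemma dist_pt (a b c d : ℝ) :
    dist (pt a b) (pt c d) = Real.sqrt ((a - c) ^ 2 + (b - d) ^ 2) := by
  rw [EuclideanSpace.dist_eq, Fin.sum_univ_two]
  congr 1
  simp [pt, Real.dist_eq, sq_abs]

lemma dist_pt_lt {a b a' b' c d : ℝ}
    (h : (a - c) ^ 2 + (b - d) ^ 2 < (a' - c) ^ 2 + (b' - d) ^ 2) :
    dist (pt a b) (pt c d) < dist (pt a' b') (pt c d) := by
  rw [dist_pt, dist_pt]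
  exact Real.sqrt_lt_sqrt (by positivity) h

lemma sq_from_dist_le {a b c d r : ℝ} (h : dist (pt a b) (pt c d) ≤ r) :
    (a - c) ^ 2 + (b - d) ^ 2 ≤ r ^ 2 := by
  rw [dist_pt] at h
  have h0 : (0:ℝ) ≤ (a - c) ^ 2 + (b - d) ^ 2 := by positivity
  nlinarith [Real.sq_sqrt h0, Real.sqrt_nonneg ((a - c) ^ 2 + (b - d) ^ 2)]

lemma exists_disk_of_forall_lt (P S N : Finset (EuclideanSpace ℝ (Fin 2)))
    (z : EuclideanSpace ℝ (Fin 2)) (hSP : S ⊆ P) (hne : S.Nonempty)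
    (hlt : ∀ q ∈ N, ∀ p ∈ S, dist p z < dist q z) :
    ∃ D : Set (EuclideanSpace ℝ (Fin 2)), IsDisk D ∧ (∀ q ∈ N, q ∉ D) ∧
      S.card ≤ (D ∩ ↑P).ncard := by
  set r : ℝ := S.sup' hne (fun p => dist p z) with hr
  have hr0 : 0 ≤ r := by
    obtain ⟨p, hp⟩ := id hne
    exact le_trans dist_nonneg (Finset.le_sup' (fun p => dist p z) hp)
  refine ⟨Metric.closedBall z r, ⟨z, r, hr0, rfl⟩, ?_, ?_⟩
  · intro q hq hqD
    have h1 : r < dist q z := (Finset.sup'_lt_iff hne).2 (fun p hp => hlt q hq p hp)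
    have h2 : dist q z ≤ r := Metric.mem_closedBall.1 hqD
    linarith
  · have hsub : (↑S : Set (EuclideanSpace ℝ (Fin 2))) ⊆ Metric.closedBall z r ∩ ↑P := by
      intro p hp
      simp only [Finset.mem_coe] at hp
      exact ⟨Metric.mem_closedBall.2 (Finset.le_sup' (fun p => dist p z) hp), hSP hp⟩
    calc S.card = (↑S : Set (EuclideanSpace ℝ (Fin 2))).ncard := (Set.ncard_coe_finset S).symm
      _ ≤ _ := Set.ncard_le_ncard hsub ((P.finite_toSet).inter_of_right _)

lemma coord_bounds {x y c : ℝ} (hc : 0 ≤ c) (h : x^2 + y^2 ≤ c^2) :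
    -c ≤ x ∧ x ≤ c ∧ -c ≤ y ∧ y ≤ c := by
  refine ⟨?_, ?_, ?_, ?_⟩ <;> nlinarith [sq_nonneg x, sq_nonneg y]

lemma sq_le_of_interval {x b : ℝ} (hl : -b ≤ x) (hu : x ≤ b) : x^2 ≤ b^2 := by nlinarith

lemma sq_le_of_le {l x : ℝ} (h0 : 0 ≤ l) (h : l ≤ x) : l^2 ≤ x^2 := by nlinarith

lemma sq_small {δ c : ℝ} (h1 : 0 < δ) (h2 : δ ≤ c) : δ^2 ≤ δ*c := by nlinarith

lemma sel_lt_base {m γ δ σ a1 b1 a2 b2 ux uy Mx My px py : ℝ}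
    (hm : 7 ≤ m) (hγ0 : 0 < γ) (hδdef : δ = m * γ) (hδs : δ ≤ 1/70000)
    (ha1l : -(2*δ) ≤ a1) (ha1r : a1 ≤ 2*δ)
    (hb1l : -(2*δ) ≤ b1) (hb1r : b1 ≤ 2*δ)
    (ha2l : -(2*δ) ≤ a2 - 1) (ha2r : a2 - 1 ≤ 2*δ)
    (hb2l : -(2*δ) ≤ b2) (hb2r : b2 ≤ 2*δ)
    (hux : ux = a2 - a1) (huy : uy = b2 - b1)
    (hMx : Mx = (a1+a2)/2) (hMy : My = (b1+b2)/2)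
    (hpx : px = 0 ∨ px = 1) (hpy0 : 0 ≤ py) (hpyδ : py ≤ δ)
    (hsel : γ/4 < σ * (-uy * (px - Mx) + ux * (py - My))) :
    (px - Mx)^2 + (py - My)^2 - (ux^2 + uy^2)/4
      < 2*(σ*(15*m)) * (-uy * (px - Mx) + ux * (py - My)) := by
  have hδ0 : 0 < δ := by
    rw [hδdef]
    have : (0:ℝ) < m := by linarith
    positivity
  have h30 : (0:ℝ) < 30*m := by linarith
  have hkey : 30*m*(γ/4) < 30*m*(σ * (-uy * (px - Mx) + ux * (py - My))) :=
    mul_lt_mul_of_pos_left hsel h30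
  have hval : 30*m*(γ/4) = (15/2)*δ := by rw [hδdef]; ring
  have hR : 2*(σ*(15*m)) * (-uy * (px - Mx) + ux * (py - My))
      = 30*m*(σ * (-uy * (px - Mx) + ux * (py - My))) := by ring
  have hA : (px - Mx)^2 ≤ (1/2 + 2*δ)^2 := by
    apply sq_le_of_interval <;> (rcases hpx with rfl | rfl <;> [linarith; linarith])
  have hB : (py - My)^2 ≤ (3*δ)^2 := by
    apply sq_le_of_interval <;> linarith
  have hux2 : (1-4*δ)^2 ≤ ux^2 := sq_le_of_le (by linarith) (by linarith)
  have huy2 : (0:ℝ) ≤ uy^2 := sq_nonneg uy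
  have hδ2 : δ^2 ≤ δ*(1/70000) := sq_small hδ0 hδs
  have hAe : (1/2 + 2*δ)^2 = 1/4 + 2*δ + 4*δ^2 := by ring
  have hBe : (3*δ)^2 = 9*δ^2 := by ring
  have huxe : (1-4*δ)^2 = 1 - 8*δ + 16*δ^2 := by ring
  linarith [hkey, hA, hB, hux2, huy2, hδ2]

lemma T_bounds {m δ ux uy A3 B3 : ℝ} (hm : 7 ≤ m) (hδ0 : 0 < δ) (hδs : δ ≤ 1/70000)
    (hux1 : 1-4*δ ≤ ux) (hux2 : ux ≤ 1+4*δ) (huy1 : -(4*δ) ≤ uy) (huy2 : uy ≤ 4*δ)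
    (hA1 : -1 ≤ A3) (hA2 : A3 ≤ 0) (hB1 : 60*m - 1 ≤ B3) (hB2 : B3 ≤ 60*m+1) :
    53*m ≤ -uy*A3 + ux*B3 ∧ -uy*A3 + ux*B3 ≤ 67*m := by
  have hδm : δ*m ≤ (1/70000)*m := mul_le_mul_of_nonneg_right hδs (by linarith)
  have hp1 : -(4*δ) ≤ -uy*A3 := by
    nlinarith [mul_le_mul_of_nonneg_left hA1 (by linarith : (0:ℝ) ≤ 4*δ)]
  have hp2 : -uy*A3 ≤ 4*δ := by
    nlinarith [mul_le_mul_of_nonneg_left hA1 (by linarith : (0:ℝ) ≤ 4*δ)]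
  have hp3 : (1-4*δ)*(60*m-1) ≤ ux*B3 :=
    mul_le_mul hux1 hB1 (by linarith) (by linarith)
  have hp4 : ux*B3 ≤ (1+4*δ)*(60*m+1) :=
    mul_le_mul hux2 hB2 (by linarith) (by linarith)
  have e3 : (1-4*δ)*(60*m-1) = 60*m - 1 - 240*(δ*m) + 4*δ := by ring
  have e4 : (1+4*δ)*(60*m+1) = 60*m + 1 + 240*(δ*m) + 4*δ := by ring
  constructor <;> linarith

lemma q3_out_base2 {m δ σ ux uy A3 B3 : ℝ}
    (hm : 7 ≤ m) (hδ0 : 0 < δ) (hδs : δ ≤ 1/70000)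
    (hux1 : 1-4*δ ≤ ux) (hux2 : ux ≤ 1+4*δ) (huy1 : -(4*δ) ≤ uy) (huy2 : uy ≤ 4*δ)
    (hA1 : -1 ≤ A3) (hA2 : A3 ≤ 0) (hB1 : 60*m - 1 ≤ B3) (hB2 : B3 ≤ 60*m+1)
    (hσ : σ = 1 ∨ σ = -1) :
    2*(σ*(15*m)) * (-uy*A3 + ux*B3) < A3^2 + B3^2 - (ux^2 + uy^2)/4 := by
  obtain ⟨hT1, hT2⟩ := T_bounds hm hδ0 hδs hux1 hux2 huy1 huy2 hA1 hA2 hB1 hB2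
  have hB3sq : (60*m-1)^2 ≤ B3^2 := sq_le_of_le (by linarith) hB1
  have huxsq : ux^2 ≤ (1+4*δ)^2 := sq_le_of_interval (by linarith) hux2
  have huysq : uy^2 ≤ (4*δ)^2 := sq_le_of_interval huy1 huy2
  have hδ2 : δ^2 ≤ δ*(1/70000) := sq_small hδ0 hδs
  have hF : 3500*m^2 - 1 ≤ A3^2 + B3^2 - (ux^2 + uy^2)/4 := by
    have e1 : (60*m-1)^2 = 3600*m^2 - 120*m + 1 := by ring
    have e2 : (1+4*δ)^2 = 1 + 8*δ + 16*δ^2 := by ring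
    have e3 : (4*δ)^2 = 16*δ^2 := by ring
    have hmsq : 49 ≤ m^2 := by nlinarith
    nlinarith [sq_nonneg A3]
  rcases hσ with rfl | rfl
  · have h5 : 30*m*(-uy*A3 + ux*B3) ≤ 30*m*(67*m) :=
      mul_le_mul_of_nonneg_left hT2 (by linarith)
    have hmsq : 49 ≤ m^2 := by nlinarith
    nlinarith
  · have h5 : 30*m*(53*m) ≤ 30*m*(-uy*A3 + ux*B3) :=
      mul_le_mul_of_nonneg_left hT1 (by linarith)
    have hmsq : 49 ≤ m^2 := by nlinarith
    nlinarith

lemma spacing_contra {ux γ δ h h' r r' : ℝ} (hγ0 : 0 < γ) (hδs : δ ≤ 1/70000)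
    (hux : 1 - 4*δ ≤ ux) (hδ0 : 0 < δ)
    (hd : h - h' = ux * γ * (r - r'))
    (h1 : h ≤ γ/4) (h2 : -(γ/4) ≤ h) (h1' : h' ≤ γ/4) (h2' : -(γ/4) ≤ h')
    (hr : r + 1 ≤ r') : False := by
  have e1 : (1:ℝ)*γ ≤ (r'-r)*γ := mul_le_mul_of_nonneg_right (by linarith) hγ0.le
  have e2 : (1-4*δ)*((1:ℝ)*γ) ≤ (1-4*δ)*((r'-r)*γ) :=
    mul_le_mul_of_nonneg_left e1 (by linarith)
  have e3 : (1-4*δ)*((r'-r)*γ) ≤ ux*((r'-r)*γ) :=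
    mul_le_mul_of_nonneg_right hux (by nlinarith)
  have e5 : δ*γ ≤ (1/70000)*γ := mul_le_mul_of_nonneg_right hδs hγ0.le
  have e6 : ux * γ * (r - r') = -(ux*((r'-r)*γ)) := by ring
  linarith

/-- Lower bound for weak ε-nets: no weak ε-net of size 3 with ε < 1/3 exists for
closed disks, i.e. ε_3^D ≥ 1/3 for weak ε-nets. -/
theorem weak_epsD_three_lower (ε : ℝ) (hε0 : 0 ≤ ε) (hε : ε < 1 / 3) :
    ∃ P : Finset (EuclideanSpace ℝ (Fin 2)),
      ∀ N : Finset (EuclideanSpace ℝ (Fin 2)), N.card ≤ 3 →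
        ∃ D : Set (EuclideanSpace ℝ (Fin 2)), IsDisk D ∧ (∀ q ∈ N, q ∉ D) ∧
          ε * P.card < ((D ∩ ↑P).ncard : ℝ) := by
  classical
  obtain ⟨m, hm7, hm4⟩ : ∃ m : ℕ, 7 ≤ m ∧ 4 ≤ (1 - 3 * ε) * m := by
    refine ⟨max 7 ⌈4 / (1 - 3 * ε)⌉₊, le_max_left _ _, ?_⟩
    have h3 : 0 < 1 - 3 * ε := by linarith
    have h1 : (4 / (1 - 3 * ε)) ≤ (⌈4 / (1 - 3 * ε)⌉₊ : ℝ) := Nat.le_ceil _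
    have h2 : (⌈4 / (1 - 3 * ε)⌉₊ : ℝ) ≤ (max 7 ⌈4 / (1 - 3 * ε)⌉₊ : ℕ) := by
      exact_mod_cast Nat.cast_le.mpr (le_max_right _ _)
    calc (4:ℝ) = (4 / (1 - 3 * ε)) * (1 - 3 * ε) := by field_simp
      _ ≤ ((max 7 ⌈4 / (1 - 3 * ε)⌉₊ : ℕ) : ℝ) * (1 - 3 * ε) := by
          apply mul_le_mul_of_nonneg_right (le_trans h1 h2) (le_of_lt h3)
      _ = (1 - 3 * ε) * ((max 7 ⌈4 / (1 - 3 * ε)⌉₊ : ℕ) : ℝ) := by ring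
  have hmR : (7:ℝ) ≤ (m:ℝ) := by exact_mod_cast hm7
  have hm0 : (0:ℝ) < (m:ℝ) := by linarith
  obtain ⟨γ, hγ0, hγm⟩ : ∃ g : ℝ, 0 < g ∧ (m:ℝ) * g ≤ 1/70000 := by
    refine ⟨1/(10000*(m:ℝ)^2), by positivity, ?_⟩
    have he : (m:ℝ) * (1/(10000*(m:ℝ)^2)) = 1/(10000*(m:ℝ)) := by
      field_simp
    rw [he, div_le_div_iff₀ (by positivity) (by norm_num)]
    linarith
  obtain ⟨δ, hδ⟩ : ∃ d : ℝ, d = (m:ℝ) * γ := ⟨_, rfl⟩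
  have hδ0 : 0 < δ := by rw [hδ]; positivity
  have hδsmall : δ ≤ 1 / 70000 := by rw [hδ]; exact hγm
  obtain ⟨xc, hxc0, hxc1, hxc2⟩ : ∃ g : ℕ → ℝ, g 0 = 0 ∧ g 1 = 1 ∧ g 2 = 0 :=
    ⟨fun i => if i = 1 then 1 else 0, by norm_num, by norm_num, by norm_num⟩
  obtain ⟨yc, hyc0, hyc1, hyc2⟩ :
      ∃ g : ℕ → ℝ, g 0 = 0 ∧ g 1 = 0 ∧ g 2 = 60 * (m:ℝ) :=
    ⟨fun i => if i = 2 then 60 * (m:ℝ) else 0, by norm_num, by norm_num, by norm_num⟩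
  obtain ⟨f, hfval⟩ :
      ∃ F : ℕ × ℕ → EuclideanSpace ℝ (Fin 2),
        ∀ i j : ℕ, F (i, j) = pt (xc i) (yc i + (j:ℝ) * γ) :=
    ⟨fun ij => pt (xc ij.1) (yc ij.1 + (ij.2 : ℝ) * γ), fun i j => rfl⟩
  obtain ⟨P, hP⟩ :
      ∃ Q : Finset (EuclideanSpace ℝ (Fin 2)), Q = ((range 3) ×ˢ (range m)).image f :=
    ⟨_, rfl⟩
  have hjγ : ∀ j : ℕ, j < m → (j:ℝ) * γ ≤ δ := by
    intro j hj
    rw [hδ]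
    have h1 : (j:ℝ) ≤ (m:ℝ) := by exact_mod_cast le_of_lt hj
    nlinarith [hγ0]
  have hcancel : ∀ j j' : ℕ, (j:ℝ) * γ = (j':ℝ) * γ → j = j' := by
    intro j j' h
    have : (j:ℝ) = (j':ℝ) := mul_right_cancel₀ (ne_of_gt hγ0) h
    exact_mod_cast this
  have hm60 : (420:ℝ) ≤ 60 * (m:ℝ) := by linarith
  have hδ1 : δ ≤ (1:ℝ) := by linarith
  have hinj : Set.InjOn f ↑((range 3) ×ˢ (range m)) := by
    rintro ⟨i, j⟩ hij ⟨i', j'⟩ hij' heq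
    simp only [Finset.coe_product, Set.mem_prod, Finset.mem_coe, Finset.mem_range] at hij hij'
    rw [hfval, hfval] at heq
    obtain ⟨hx, hy⟩ := pt_inj heq
    have hj1 : (j:ℝ) * γ ≤ δ := hjγ j hij.2
    have hj2 : (j':ℝ) * γ ≤ δ := hjγ j' hij'.2
    have hj1' : (0:ℝ) ≤ (j:ℝ) * γ := by positivity
    have hj2' : (0:ℝ) ≤ (j':ℝ) * γ := by positivity
    have hi : i = 0 ∨ i = 1 ∨ i = 2 := by omega
    have hi' : i' = 0 ∨ i' = 1 ∨ i' = 2 := by omega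
    have hgoal : i = i' → j = j' → ((i, j) : ℕ × ℕ) = (i', j') := by
      rintro rfl rfl; rfl
    rcases hi with rfl | rfl | rfl <;> rcases hi' with rfl | rfl | rfl
    · rw [hyc0] at hy
      exact hgoal rfl (hcancel j j' (by linarith))
    · rw [hxc0, hxc1] at hx
      norm_num at hx
    · rw [hyc0, hyc2] at hy
      exfalso
      linarith
    · rw [hxc1, hxc0] at hx
      norm_num at hx
    · rw [hyc1] at hy
      exact hgoal rfl (hcancel j j' (by linarith))
    · rw [hxc1, hxc2] at hx
      norm_num at hx
    · rw [hyc2, hyc0] at hy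
      exfalso
      linarith
    · rw [hxc2, hxc1] at hx
      norm_num at hx
    · rw [hyc2] at hy
      exact hgoal rfl (hcancel j j' (by linarith))
  have hPcard : P.card = 3 * m := by
    rw [hP, Finset.card_image_of_injOn hinj, Finset.card_product, Finset.card_range,
      Finset.card_range]
  have hεm : ε * (3 * (m:ℝ)) ≤ (m:ℝ) - 4 := by linarith [hm4]
  refine ⟨P, ?_⟩
  intro N hN3
  by_cases hcase : ∀ i ∈ Finset.range 3, ∃ q ∈ N, dist q (pt (xc i) (yc i)) ≤ 2 * δ
  · -- every cluster has a nearby blocker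
    obtain ⟨q1, hq1N, hq1d⟩ := hcase 0 (by norm_num)
    obtain ⟨q2, hq2N, hq2d⟩ := hcase 1 (by norm_num)
    obtain ⟨q3, hq3N, hq3d⟩ := hcase 2 (by norm_num)
    obtain ⟨a1, ha1d⟩ : ∃ x : ℝ, x = q1 0 := ⟨_, rfl⟩
    obtain ⟨b1, hb1d⟩ : ∃ x : ℝ, x = q1 1 := ⟨_, rfl⟩
    obtain ⟨a2, ha2d⟩ : ∃ x : ℝ, x = q2 0 := ⟨_, rfl⟩
    obtain ⟨b2, hb2d⟩ : ∃ x : ℝ, x = q2 1 := ⟨_, rfl⟩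
    obtain ⟨a3, ha3d⟩ : ∃ x : ℝ, x = q3 0 := ⟨_, rfl⟩
    obtain ⟨b3, hb3d⟩ : ∃ x : ℝ, x = q3 1 := ⟨_, rfl⟩
    have e1 : q1 = pt a1 b1 := by rw [ha1d, hb1d]; exact pt_eta q1
    have e2 : q2 = pt a2 b2 := by rw [ha2d, hb2d]; exact pt_eta q2
    have e3 : q3 = pt a3 b3 := by rw [ha3d, hb3d]; exact pt_eta q3
    rw [e1, hxc0, hyc0] at hq1d
    rw [e2, hxc1, hyc1] at hq2d
    rw [e3, hxc2, hyc2] at hq3d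
    have hδ2 : (0:ℝ) ≤ 2 * δ := by linarith
    obtain ⟨t1, t2, t3, t4⟩ := coord_bounds hδ2 (sq_from_dist_le hq1d)
    obtain ⟨t5, t6, t7, t8⟩ := coord_bounds hδ2 (sq_from_dist_le hq2d)
    obtain ⟨t9, t10, t11, t12⟩ := coord_bounds hδ2 (sq_from_dist_le hq3d)
    have ia1l : -(2*δ) ≤ a1 := by linarith
    have ia1r : a1 ≤ 2*δ := by linarith
    have ib1l : -(2*δ) ≤ b1 := by linarith
    have ib1r : b1 ≤ 2*δ := by linarith
    have ia2l : -(2*δ) ≤ a2 - 1 := by linarith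
    have ia2r : a2 - 1 ≤ 2*δ := by linarith
    have ib2l : -(2*δ) ≤ b2 := by linarith
    have ib2r : b2 ≤ 2*δ := by linarith
    have ia3l : -(2*δ) ≤ a3 := by linarith
    have ia3r : a3 ≤ 2*δ := by linarith
    have ib3l : -(2*δ) ≤ b3 - 60*(m:ℝ) := by linarith
    have ib3r : b3 - 60*(m:ℝ) ≤ 2*δ := by linarith
    clear t1 t2 t3 t4 t5 t6 t7 t8 t9 t10 t11 t12 hq1d hq2d hq3d
    have hne12 : q1 ≠ q2 := by
      intro h
      have h1 : a1 = a2 := by rw [ha1d, ha2d, h]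
      linarith
    have hne13 : q1 ≠ q3 := by
      intro h
      have h1 : b1 = b3 := by rw [hb1d, hb3d, h]
      linarith
    have hne23 : q2 ≠ q3 := by
      intro h
      have h1 : b2 = b3 := by rw [hb2d, hb3d, h]
      linarith
    have hNsub : ({q1, q2, q3} : Finset (EuclideanSpace ℝ (Fin 2))) ⊆ N := by
      intro q hq
      simp only [Finset.mem_insert, Finset.mem_singleton] at hq
      rcases hq with rfl | rfl | rfl <;> assumption
    have hNcard3 : ({q1, q2, q3} : Finset (EuclideanSpace ℝ (Fin 2))).card = 3 := by
      rw [Finset.card_insert_of_notMem (by simp [hne12, hne13]),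
        Finset.card_insert_of_notMem (by simp [hne23]), Finset.card_singleton]
    have hNeq : N = {q1, q2, q3} :=
      (Finset.eq_of_subset_of_card_le hNsub (by rw [hNcard3]; exact hN3)).symm
    obtain ⟨ux, huxd⟩ : ∃ x : ℝ, x = a2 - a1 := ⟨_, rfl⟩
    obtain ⟨uy, huyd⟩ : ∃ x : ℝ, x = b2 - b1 := ⟨_, rfl⟩
    obtain ⟨Mx, hMxd⟩ : ∃ x : ℝ, x = (a1 + a2)/2 := ⟨_, rfl⟩
    obtain ⟨My, hMyd⟩ : ∃ x : ℝ, x = (b1 + b2)/2 := ⟨_, rfl⟩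
    obtain ⟨hh, hhval⟩ : ∃ g : ℕ → ℕ → ℝ,
        ∀ i j, g i j = -uy * (xc i - Mx) + ux * (yc i + (j:ℝ) * γ - My) :=
      ⟨fun i j => -uy * (xc i - Mx) + ux * (yc i + (j:ℝ) * γ - My), fun i j => rfl⟩
    obtain ⟨C, hCval⟩ : ∃ g : ℝ → ℕ → Finset ℕ,
        ∀ s i, g s i = (range m).filter (fun j => γ/4 < s * hh i j) :=
      ⟨fun s i => (range m).filter (fun j => γ/4 < s * hh i j), fun s i => rfl⟩
    obtain ⟨Mid, hMidval⟩ : ∃ g : ℕ → Finset ℕ,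
        ∀ i, g i = (range m).filter
          (fun j => ¬(γ/4 < (1:ℝ) * hh i j) ∧ ¬(γ/4 < (-1:ℝ) * hh i j)) :=
      ⟨_, fun i => rfl⟩
    have huxl : 1 - 4*δ ≤ ux := by rw [huxd]; linarith
    have huxr : ux ≤ 1 + 4*δ := by rw [huxd]; linarith
    have huyl : -(4*δ) ≤ uy := by rw [huyd]; linarith
    have huyr : uy ≤ 4*δ := by rw [huyd]; linarith
    have hspace : ∀ i j j' : ℕ, hh i j - hh i j' = ux * γ * ((j:ℝ) - (j':ℝ)) := by
      intro i j j'
      rw [hhval, hhval]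
      ring
    have hpart : ∀ i, (C 1 i).card + (C (-1) i).card + (Mid i).card = m := by
      intro i
      have e1' := Finset.card_filter_add_card_filter_not
        (s := range m) (p := fun j => γ/4 < (1:ℝ) * hh i j)
      have himp : ∀ j, γ/4 < (-1:ℝ) * hh i j → ¬(γ/4 < (1:ℝ) * hh i j) := by
        intro j h h1
        linarith [hγ0]
      have e6 : (range m).filter (fun j => ¬(γ/4 < (1:ℝ) * hh i j)) = C (-1) i ∪ Mid i := by
        rw [hCval, hMidval]
        ext j
        simp only [Finset.mem_filter, Finset.mem_union, Finset.mem_range]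
        constructor
        · rintro ⟨hr, hA⟩
          by_cases hB : γ/4 < (-1:ℝ) * hh i j
          · exact Or.inl ⟨hr, hB⟩
          · exact Or.inr ⟨hr, hA, hB⟩
        · rintro (⟨hr, hB⟩ | ⟨hr, hA, hB⟩)
          · exact ⟨hr, himp j hB⟩
          · exact ⟨hr, hA⟩
      have e7 : Disjoint (C (-1) i) (Mid i) := by
        rw [Finset.disjoint_left]
        intro j hj hj'
        rw [hCval] at hj
        rw [hMidval] at hj'
        simp only [Finset.mem_filter] at hj hj'
        exact hj'.2.2 hj.2
      have e8 : (C 1 i).card = ((range m).filter (fun j => γ/4 < (1:ℝ) * hh i j)).card := by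
        rw [hCval]
      rw [e6, Finset.card_union_of_disjoint e7, ← e8, Finset.card_range] at e1'
      omega
    have hmid : ∀ i, (Mid i).card ≤ 1 := by
      intro i
      rw [Finset.card_le_one]
      intro j hj j' hj'
      rw [hMidval] at hj hj'
      simp only [Finset.mem_filter, Finset.mem_range, not_lt] at hj hj'
      obtain ⟨hjm, hj1, hj2⟩ := hj
      obtain ⟨hjm', hj1', hj2'⟩ := hj'
      have hup : hh i j ≤ γ/4 := by linarith
      have hdn : -(γ/4) ≤ hh i j := by linarith
      have hup' : hh i j' ≤ γ/4 := by linarith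
      have hdn' : -(γ/4) ≤ hh i j' := by linarith
      by_contra hne
      rcases Nat.lt_or_ge j j' with hlt' | hge
      · have hr : (j:ℝ) + 1 ≤ (j':ℝ) := by exact_mod_cast hlt'
        exact spacing_contra hγ0 hδsmall huxl hδ0 (hspace i j j') hup hdn hup' hdn' hr
      · have hlt'' : j' < j := by omega
        have hr : (j':ℝ) + 1 ≤ (j:ℝ) := by exact_mod_cast hlt''
        exact spacing_contra hγ0 hδsmall huxl hδ0 (hspace i j' j) hup' hdn' hup hdn hr
    have hAB : m - 1 ≤ (C 1 0).card + (C 1 1).card ∨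
        m - 1 ≤ (C (-1) 0).card + (C (-1) 1).card := by
      have p0 := hpart 0
      have p1 := hpart 1
      have m0 := hmid 0
      have m1 := hmid 1
      omega
    have main : ∀ σ : ℝ, σ = 1 ∨ σ = -1 → m - 1 ≤ (C σ 0).card + (C σ 1).card →
        ∃ D : Set (EuclideanSpace ℝ (Fin 2)), IsDisk D ∧ (∀ q ∈ N, q ∉ D) ∧
          ε * P.card < ((D ∩ ↑P).ncard : ℝ) := by
      intro σ hσ hbig
      obtain ⟨zx, hzxd⟩ : ∃ x : ℝ, x = Mx - (σ*(15*(m:ℝ)))*uy := ⟨_, rfl⟩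
      obtain ⟨zy, hzyd⟩ : ∃ x : ℝ, x = My + (σ*(15*(m:ℝ)))*ux := ⟨_, rfl⟩
      have hpz : ∀ px py : ℝ, (px - zx)^2 + (py - zy)^2
          = (px - Mx)^2 + (py - My)^2
            - 2*(σ*(15*(m:ℝ)))*(-uy*(px - Mx) + ux*(py - My))
            + (σ*(15*(m:ℝ)))^2*(ux^2+uy^2) := by
        intro px py
        rw [hzxd, hzyd]
        ring
      have hq1z : (a1 - zx)^2 + (b1 - zy)^2
          = (ux^2+uy^2)/4 + (σ*(15*(m:ℝ)))^2*(ux^2+uy^2) := by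
        rw [hzxd, hzyd, hMxd, hMyd, huxd, huyd]; ring
      have hq2z : (a2 - zx)^2 + (b2 - zy)^2
          = (ux^2+uy^2)/4 + (σ*(15*(m:ℝ)))^2*(ux^2+uy^2) := by
        rw [hzxd, hzyd, hMxd, hMyd, huxd, huyd]; ring
      have hA31 : -1 ≤ a3 - Mx := by rw [hMxd]; linarith
      have hA32 : a3 - Mx ≤ 0 := by rw [hMxd]; linarith
      have hB31 : 60*(m:ℝ) - 1 ≤ b3 - My := by rw [hMyd]; linarith
      have hB32 : b3 - My ≤ 60*(m:ℝ) + 1 := by rw [hMyd]; linarith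
      have hq3far : dist (pt a1 b1) (pt zx zy) < dist (pt a3 b3) (pt zx zy) := by
        apply dist_pt_lt
        have hout := q3_out_base2 hmR hδ0 hδsmall huxl huxr huyl huyr
          hA31 hA32 hB31 hB32 hσ
        linarith [hq1z, hpz a3 b3, hout]
      have hsel_lt : ∀ i j : ℕ, i = 0 ∨ i = 1 → j ∈ C σ i →
          dist (f (i,j)) (pt zx zy) < dist (pt a1 b1) (pt zx zy) ∧
          dist (f (i,j)) (pt zx zy) < dist (pt a2 b2) (pt zx zy) ∧
          dist (f (i,j)) (pt zx zy) < dist (pt a3 b3) (pt zx zy) := by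
        intro i j hi hjC
        rw [hCval] at hjC
        simp only [Finset.mem_filter, Finset.mem_range] at hjC
        obtain ⟨hjm, hsel⟩ := hjC
        have hyci : yc i = 0 := by rcases hi with rfl | rfl; exacts [hyc0, hyc1]
        have hxci : xc i = 0 ∨ xc i = 1 := by
          rcases hi with rfl | rfl
          · exact Or.inl hxc0
          · exact Or.inr hxc1
        have hpy0 : 0 ≤ yc i + (j:ℝ)*γ := by rw [hyci]; positivity
        have hpyδ : yc i + (j:ℝ)*γ ≤ δ := by
          have := hjγ j hjm
          rw [hyci]
          linarith
        rw [hhval] at hsel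
        have hcore := sel_lt_base hmR hγ0 hδ hδsmall ia1l ia1r ib1l ib1r
          ia2l ia2r ib2l ib2r huxd huyd hMxd hMyd hxci hpy0 hpyδ hsel
        have d1 : dist (f (i,j)) (pt zx zy) < dist (pt a1 b1) (pt zx zy) := by
          rw [hfval]
          apply dist_pt_lt
          linarith [hpz (xc i) (yc i + (j:ℝ)*γ), hq1z, hcore]
        have d2 : dist (f (i,j)) (pt zx zy) < dist (pt a2 b2) (pt zx zy) := by
          rw [hfval]
          apply dist_pt_lt
          linarith [hpz (xc i) (yc i + (j:ℝ)*γ), hq2z, hcore]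
        exact ⟨d1, d2, lt_trans d1 hq3far⟩
      obtain ⟨S, hSd⟩ : ∃ S : Finset (EuclideanSpace ℝ (Fin 2)),
          S = ((C σ 0).image (fun j => f (0, j))) ∪ ((C σ 1).image (fun j => f (1, j))) :=
        ⟨_, rfl⟩
      have hCsub : ∀ s : ℝ, ∀ i, ∀ j ∈ C s i, j ∈ range m := by
        intro s i j hj
        rw [hCval] at hj
        simp only [Finset.mem_filter] at hj
        exact hj.1
      have hSP : S ⊆ P := by
        rw [hSd, hP]
        apply Finset.union_subset
        · intro p hp
          obtain ⟨j, hj, rfl⟩ := Finset.mem_image.1 hp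
          exact Finset.mem_image_of_mem f
            (Finset.mem_product.2 ⟨by norm_num, hCsub σ 0 j hj⟩)
        · intro p hp
          obtain ⟨j, hj, rfl⟩ := Finset.mem_image.1 hp
          exact Finset.mem_image_of_mem f
            (Finset.mem_product.2 ⟨by norm_num, hCsub σ 1 j hj⟩)
      have hinj01 : ∀ i : ℕ, Set.InjOn (fun j => f (i, j)) ↑(C σ i) := by
        intro i j hj j' hj' heq
        have heq' : f (i, j) = f (i, j') := heq
        rw [hfval, hfval] at heq'
        have h2 := (pt_inj heq').2
        have h3 : (j:ℝ) * γ = (j':ℝ) * γ := by linarith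
        exact hcancel j j' h3
      have hdisj : Disjoint ((C σ 0).image (fun j => f (0, j)))
          ((C σ 1).image (fun j => f (1, j))) := by
        rw [Finset.disjoint_left]
        rintro p hp0 hp1
        obtain ⟨j, hj, rfl⟩ := Finset.mem_image.1 hp0
        obtain ⟨j', hj', heq⟩ := Finset.mem_image.1 hp1
        have heq' : f (1, j') = f (0, j) := heq
        rw [hfval, hfval] at heq'
        have h1 := (pt_inj heq').1
        rw [hxc1, hxc0] at h1
        norm_num at h1
      have hScard : (C σ 0).card + (C σ 1).card = S.card := by
        rw [hSd, Finset.card_union_of_disjoint hdisj,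
          Finset.card_image_of_injOn (hinj01 0), Finset.card_image_of_injOn (hinj01 1)]
      have hSne : S.Nonempty := Finset.card_pos.1 (by omega)
      have hlt : ∀ q ∈ N, ∀ p ∈ S, dist p (pt zx zy) < dist q (pt zx zy) := by
        intro q hq p hp
        rw [hSd, Finset.mem_union] at hp
        have hp' : ∃ i j, (i = 0 ∨ i = 1) ∧ j ∈ C σ i ∧ p = f (i, j) := by
          rcases hp with hp | hp
          · obtain ⟨j, hj, rfl⟩ := Finset.mem_image.1 hp
            exact ⟨0, j, Or.inl rfl, hj, rfl⟩
          · obtain ⟨j, hj, rfl⟩ := Finset.mem_image.1 hp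
            exact ⟨1, j, Or.inr rfl, hj, rfl⟩
        obtain ⟨i, j, hi, hjC, rfl⟩ := hp'
        obtain ⟨d1, d2, d3⟩ := hsel_lt i j hi hjC
        rw [hNeq] at hq
        simp only [Finset.mem_insert, Finset.mem_singleton] at hq
        rcases hq with rfl | rfl | rfl
        · rw [e1]; exact d1
        · rw [e2]; exact d2
        · rw [e3]; exact d3
      obtain ⟨D, hD, hDN, hDc⟩ := exists_disk_of_forall_lt P S N (pt zx zy) hSP hSne hlt
      refine ⟨D, hD, hDN, ?_⟩
      have h1 : m ≤ S.card + 1 := by omega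
      have h2 : (m:ℝ) ≤ (S.card : ℝ) + 1 := by exact_mod_cast h1
      have h3 : (S.card : ℝ) ≤ ((D ∩ ↑P).ncard : ℝ) := by exact_mod_cast hDc
      rw [hPcard]
      push_cast
      linarith [hεm]
    rcases hAB with hbig | hbig
    · exact main 1 (Or.inl rfl) hbig
    · exact main (-1) (Or.inr rfl) hbig
  · -- some cluster is far from all of N
    push_neg at hcase
    obtain ⟨i, hi3, hfar⟩ := hcase
    obtain ⟨S, hS⟩ : ∃ S : Finset (EuclideanSpace ℝ (Fin 2)),
        S = (range m).image (fun j => f (i, j)) := ⟨_, rfl⟩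
    have hSP : S ⊆ P := by
      rw [hS, hP]
      intro p hp
      obtain ⟨j, hj, rfl⟩ := Finset.mem_image.1 hp
      exact Finset.mem_image_of_mem f (Finset.mem_product.2 ⟨hi3, hj⟩)
    have hSne : S.Nonempty := by
      rw [hS]
      exact ⟨f (i, 0), Finset.mem_image_of_mem _ (Finset.mem_range.2 (by omega))⟩
    have hScard : S.card = m := by
      rw [hS, Finset.card_image_of_injOn, Finset.card_range]
      intro j hj j' hj' hjj
      have heq' : f (i, j) = f (i, j') := hjj
      rw [hfval, hfval] at heq'
      have h2 := (pt_inj heq').2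
      exact hcancel j j' (by linarith)
    have hlt : ∀ q ∈ N, ∀ p ∈ S, dist p (pt (xc i) (yc i)) < dist q (pt (xc i) (yc i)) := by
      intro q hq p hp
      rw [hS] at hp
      obtain ⟨j, hj, rfl⟩ := Finset.mem_image.1 hp
      have hjm := Finset.mem_range.1 hj
      have h1 : dist (f (i, j)) (pt (xc i) (yc i)) ≤ δ := by
        rw [hfval, dist_pt]
        have he : (xc i - xc i) ^ 2 + (yc i + (j:ℝ) * γ - yc i) ^ 2 = ((j:ℝ) * γ) ^ 2 := by
          ring
        rw [he, Real.sqrt_sq (by positivity)]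
        exact hjγ j hjm
      have h2 : 2 * δ < dist q (pt (xc i) (yc i)) := hfar q hq
      linarith
    obtain ⟨D, hD, hDN, hDc⟩ := exists_disk_of_forall_lt P S N (pt (xc i) (yc i)) hSP hSne hlt
    refine ⟨D, hD, hDN, ?_⟩
    have h3 : (S.card : ℝ) ≤ ((D ∩ ↑P).ncard : ℝ) := by exact_mod_cast hDc
    rw [hPcard]
    rw [hScard] at h3
    push_cast
    linarith [hεm]
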